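/- Let n ≤ r be positive integers and let p : Fin r → (Fin n → ℤ) be a family of vectors in ℤ^n. The following are equivalent: (i) there exist an injective map σ : Fin n → Fin r and ℤ-linear forms e_1, …, e_n : (Fin n → ℤ) → ℤ such that e_j(p_{σ(i)}) = −1 if i = j and e_j(p_{σ(i)}) = 0 if i ≠ j (for all 1 ≤ i, j ≤ n), and e_j(p_k) ≥ 0 for every j and every index k ∈ Fin r with k ≠ σ(j); (ii) there exists an injective map σ : Fin n → Fin r such that the vectors p_{σ(1)}, …, p_{σ(n)} form a ℤ-basis of ℤ^n and, for every index k not in the image of σ, all coordinates of p_k with respect to this basis are ≤ 0. -/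

import Mathlib

/-- Combinatorial criterion: a complete collection of Demazure roots exists for the
family of primitive ray generators `p : Fin r → (Fin n → ℤ)` iff one can choose `n`
of the vectors forming a ℤ-basis of ℤⁿ such that all remaining vectors lie in the
negative octant with respect to this basis. -/
theorem euler_toric_complete_collection_iff_basis_negative_octant
    (n r : ℕ) (hn : 0 < n) (hnr : n ≤ r) (p : Fin r → (Fin n → ℤ)) :
    (∃ σ : Fin n → Fin r, Function.Injective σ ∧
      ∃ e : Fin n → ((Fin n → ℤ) →ₗ[ℤ] ℤ),
        (∀ i j : Fin n, e j (p (σ i)) = if i = j then -1 else 0) ∧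
        (∀ j : Fin n, ∀ k : Fin r, k ≠ σ j → 0 ≤ e j (p k))) ↔
    (∃ σ : Fin n → Fin r, Function.Injective σ ∧
      ∃ b : Module.Basis (Fin n) ℤ (Fin n → ℤ), (∀ i : Fin n, b i = p (σ i)) ∧
        ∀ k : Fin r, k ∉ Set.range σ → ∀ i : Fin n, b.repr (p k) i ≤ 0) := by
  constructor
  · rintro ⟨σ, hσ, e, he1, he2⟩
    -- the map v ↦ (j ↦ -(e j v))
    set φ : (Fin n → ℤ) →ₗ[ℤ] (Fin n → ℤ) := LinearMap.pi (fun j => -(e j)) with hφ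
    have hφapp : ∀ v j, φ v j = -(e j v) := fun v j => rfl
    have hφσ : ∀ i, φ (p (σ i)) = Pi.single i 1 := by
      intro i
      funext j
      rw [hφapp, he1 i j]
      by_cases h : i = j
      · subst h; simp
      · simp [h, Pi.single_apply, Ne.symm h]
    have hsurj : Function.Surjective φ := by
      rw [← LinearMap.range_eq_top]
      rw [← top_le_iff, ← (Pi.basisFun ℤ (Fin n)).span_eq, Submodule.span_le]
      rintro _ ⟨i, rfl⟩
      exact ⟨p (σ i), by rw [hφσ i]; simp [Pi.basisFun_apply]⟩
    have hinj : Function.Injective φ :=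
      OrzechProperty.injective_of_surjective_endomorphism φ hsurj
    let ψ : (Fin n → ℤ) ≃ₗ[ℤ] (Fin n → ℤ) := LinearEquiv.ofBijective φ ⟨hinj, hsurj⟩
    have hψ : ∀ v, ψ v = φ v := fun v => rfl
    refine ⟨σ, hσ, (Pi.basisFun ℤ (Fin n)).map ψ.symm, ?_, ?_⟩
    · intro i
      rw [Module.Basis.map_apply]
      apply ψ.injective
      rw [LinearEquiv.apply_symm_apply, hψ, hφσ i]
      simp [Pi.basisFun_apply]
    · intro k hk i
      have hrepr : ((Pi.basisFun ℤ (Fin n)).map ψ.symm).repr (p k) i = φ (p k) i := by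
        rw [Module.Basis.map_repr]
        simp [Pi.basisFun_repr, hψ]
      rw [hrepr, hφapp]
      have : 0 ≤ e i (p k) := he2 i k (fun h => hk ⟨i, h.symm⟩)
      omega
  · rintro ⟨σ, hσ, b, hb, hneg⟩
    refine ⟨σ, hσ, fun j => -(b.coord j), ?_, ?_⟩
    · intro i j
      simp only [LinearMap.neg_apply, Module.Basis.coord_apply, ← hb i, Module.Basis.repr_self]
      by_cases h : i = j <;> simp [h, Finsupp.single_apply]
    · intro j k hk
      simp only [LinearMap.neg_apply, Module.Basis.coord_apply, neg_nonneg]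
      by_cases hr : k ∈ Set.range σ
      · obtain ⟨i, rfl⟩ := hr
        have hij : i ≠ j := fun h => hk (by rw [h])
        rw [← hb i, Module.Basis.repr_self]
        simp [Finsupp.single_apply, hij]
      · exact hneg k hr j
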